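/- Let ψ : ℝ² → ℝ be differentiable at the origin, and let S = {z ∈ ℝ² : ¬(z₁ > 0 and z₂ > 0)} be the complement of the open positive orthant. If the origin is a local minimizer of ψ on S, then ∇ψ(0) = 0. -/

import Mathlib

/-- Section 2 claim about the internal kink point: if `ψ` is differentiable at the
origin and the origin is a local minimizer of `ψ` on the complement
`S = {z : ¬(z₁ > 0 ∧ z₂ > 0)}` of the open positive orthant, then `∇ψ(0) = 0`. -/
theorem kink_local_min_grad_zero
    (ψ : EuclideanSpace ℝ (Fin 2) → ℝ)
    (hψ : DifferentiableAt ℝ ψ 0)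
    (S : Set (EuclideanSpace ℝ (Fin 2)))
    (hS : S = {z : EuclideanSpace ℝ (Fin 2) | ¬(0 < z 0 ∧ 0 < z 1)})
    (hmin : IsLocalMinOn ψ S 0) :
    gradient ψ 0 = 0 := by
  have hmem : ∀ (i : Fin 2) (c : ℝ), (c • EuclideanSpace.single i (1:ℝ)) ∈ S := by
    intro i c
    rw [hS]
    fin_cases i <;> simp [EuclideanSpace.single_apply]
  have hcone : ∀ (i : Fin 2) (c : ℝ),
      (c • EuclideanSpace.single i (1:ℝ)) ∈ posTangentConeAt S 0 := by
    intro i c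
    have hseg : segment ℝ (0:EuclideanSpace ℝ (Fin 2)) (c • EuclideanSpace.single i 1) ⊆ S := by
      intro z hz
      rw [segment_eq_image] at hz
      obtain ⟨t, ht, rfl⟩ := hz
      simpa [smul_smul] using hmem i (t * c)
    simpa using sub_mem_posTangentConeAt_of_segment_subset hseg
  have hder : ∀ (i : Fin 2), fderiv ℝ ψ 0 (EuclideanSpace.single i (1:ℝ)) = 0 := by
    intro i
    have h1 := hcone i 1
    have h2 := hcone i (-1)
    simp only [one_smul] at h1
    rw [neg_one_smul] at h2
    exact hmin.hasFDerivWithinAt_eq_zero (hψ.hasFDerivAt.hasFDerivWithinAt) h1 h2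
  have hg : ∀ y, inner ℝ (gradient ψ 0) y = fderiv ℝ ψ 0 y := by
    intro y
    have h := hψ.hasGradientAt.hasFDerivAt.unique hψ.hasFDerivAt
    rw [← h]
    simp [InnerProductSpace.toDual]
  ext i
  have := hg (EuclideanSpace.single i (1:ℝ))
  rw [hder i, real_inner_comm, EuclideanSpace.inner_single_left] at this
  simpa using this
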